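/- Let k > 0 and a, b ∈ ℝ satisfy either ((|a|^{2/3} + |b|^{2/3})^{3/2} < k and |b| < |a|), or (2^{3/2}·|ab|^{1/2} < k and |b| ≥ |a|). Then there exists a constant K > 0 depending only on a, b, k such that for every n ∈ ℕ there exists a constant C_n ≥ 0 with the following property: for every continuous input u : [0,∞) → ℝ, every ξ = (ξ_1,…,ξ_n) ∈ ℝ^n, and every solution (x_1,…,x_n) of the linear string x_i'(t) = a·x_{i−1}(t) − k·x_i(t) + b·x_{i+1}(t) (with x_0 := u, x_{n+1} := 0) and x_i(0) = ξ_i, one has ‖x_i‖_{[0,t],2} ≤ K·‖u‖_{[0,t],2} + C_n·max_{j=1,…,n} |ξ_j| for all t ≥ 0 and all i = 1,…,n. -/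

import Mathlib

open Set intervalIntegral


/-- Weighted Young inequality. -/
lemma young2 (c p q lam : ℝ) (hlam : 0 < lam) :
    2 * c * p * q ≤ |c| * p ^ 2 / lam + |c| * lam * q ^ 2 := by
  rw [div_add' _ _ _ (ne_of_gt hlam), le_div_iff₀ hlam]
  nlinarith [mul_nonneg (sub_nonneg.mpr (le_abs_self c)) (sq_nonneg (p + lam * q)),
    mul_nonneg (by linarith [neg_abs_le c] : (0:ℝ) ≤ |c| + c) (sq_nonneg (p - lam * q))]

lemma sqrt_add_le' (p q : ℝ) (hp : 0 ≤ p) (hq : 0 ≤ q) :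
    Real.sqrt (p + q) ≤ Real.sqrt p + Real.sqrt q := by
  have h : p + q ≤ (Real.sqrt p + Real.sqrt q) ^ 2 := by
    have := Real.sq_sqrt hp
    have := Real.sq_sqrt hq
    nlinarith [mul_nonneg (Real.sqrt_nonneg p) (Real.sqrt_nonneg q)]
  calc Real.sqrt (p + q) ≤ Real.sqrt ((Real.sqrt p + Real.sqrt q) ^ 2) := Real.sqrt_le_sqrt h
    _ = Real.sqrt p + Real.sqrt q := Real.sqrt_sq (by positivity)

/-- superadditivity of `t ^ (3/2)`. -/
lemma rpow_three_halves_superadd (p q : ℝ) (hp : 0 ≤ p) (hq : 0 ≤ q) :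
    p ^ ((3:ℝ)/2) + q ^ ((3:ℝ)/2) ≤ (p + q) ^ ((3:ℝ)/2) := by
  have h32 : (3:ℝ)/2 = 1 + 1/2 := by norm_num
  have hne : (1:ℝ) + 1/2 ≠ 0 := by norm_num
  rw [h32, Real.rpow_add' hp hne, Real.rpow_add' hq hne,
    Real.rpow_add' (by positivity) hne, Real.rpow_one, Real.rpow_one, Real.rpow_one]
  have h1 : p ^ ((1:ℝ)/2) ≤ (p + q) ^ ((1:ℝ)/2) :=
    Real.rpow_le_rpow hp (by linarith) (by norm_num)
  have h2 : q ^ ((1:ℝ)/2) ≤ (p + q) ^ ((1:ℝ)/2) :=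
    Real.rpow_le_rpow hq (by linarith) (by norm_num)
  nlinarith [Real.rpow_nonneg hp ((1:ℝ)/2), Real.rpow_nonneg hq ((1:ℝ)/2)]

/-- Key energy (differential) inequality for a single stage. -/
lemma key_ineq (k lam aa bb : ℝ) (hk : 0 < k) (hlam : 0 < lam)
    (x g h : ℝ → ℝ)
    (hg : ContinuousOn g (Set.Ici 0)) (hh : ContinuousOn h (Set.Ici 0))
    (hx : ∀ t ≥ (0:ℝ), HasDerivAt x (aa * g t - k * x t + bb * h t) t) :
    ∀ t ≥ (0:ℝ), (2*k - |aa| / lam - |bb| * lam) * (∫ s in (0:ℝ)..t, (x s)^2) ≤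
      (x 0)^2 + |aa| * lam * (∫ s in (0:ℝ)..t, (g s)^2)
        + (|bb| / lam) * (∫ s in (0:ℝ)..t, (h s)^2) := by
  intro T hT
  have hxc : ContinuousOn x (Set.Ici 0) := fun s hs => (hx s hs).continuousAt.continuousWithinAt
  rcases eq_or_lt_of_le hT with hT0 | hT'
  · simp [← hT0]
    positivity
  set γ : ℝ := 2*k - |aa| / lam - |bb| * lam with hγ
  set φ : ℝ → ℝ := fun s => γ * (x s)^2 - |aa| * lam*(g s)^2 - (|bb| / lam)*(h s)^2 with hφdef
  have hφ : ContinuousOn φ (Set.Ici 0) := by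
    apply ContinuousOn.sub
    apply ContinuousOn.sub
    · exact continuousOn_const.mul (hxc.pow 2)
    · exact continuousOn_const.mul (hg.pow 2)
    · exact continuousOn_const.mul (hh.pow 2)
  set F : ℝ → ℝ := fun t => (x t)^2 + ∫ s in (0:ℝ)..t, φ s with hFdef
  have hsub : Set.Icc (0:ℝ) T ⊆ Set.Ici 0 := Set.Icc_subset_Ici_self
  have huIcc : Set.uIcc (0:ℝ) T = Set.Icc 0 T := Set.uIcc_of_le hT
  have hφint : MeasureTheory.IntegrableOn φ (Set.uIcc (0:ℝ) T) := by
    rw [huIcc]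
    exact (hφ.mono hsub).integrableOn_compact isCompact_Icc
  -- derivative of F at interior points
  have hFd : ∀ t ∈ Set.Ioo (0:ℝ) T,
      HasDerivAt F (2 * x t * (aa * g t - k * x t + bb * h t) + φ t) t := by
    intro t ht
    have ht0 : (0:ℝ) < t := ht.1
    have h1 : HasDerivAt (fun s => (x s)^2) (2 * x t * (aa * g t - k * x t + bb * h t)) t := by
      have := (hx t ht0.le).fun_pow 2
      simpa [mul_comm, mul_assoc] using this
    have hint : IntervalIntegrable φ MeasureTheory.volume 0 t := by
      apply (hφ.mono ?_).intervalIntegrable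
      rw [Set.uIcc_of_le ht0.le]
      exact Set.Icc_subset_Ici_self
    have hmeas : StronglyMeasurableAtFilter φ (nhds t) :=
      (hφ.mono Set.Ioi_subset_Ici_self).stronglyMeasurableAtFilter isOpen_Ioi t ht0
    have hct : ContinuousAt φ t := hφ.continuousAt (Ici_mem_nhds ht0)
    exact h1.add (integral_hasDerivAt_right hint hmeas hct)
  have hFcont : ContinuousOn F (Set.Icc 0 T) := by
    apply ContinuousOn.add
    · exact ((hxc.mono hsub).pow 2)
    · have := continuousOn_primitive_interval (μ := MeasureTheory.volume) (f := φ)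
        (a := (0:ℝ)) (b := T) hφint
      rwa [huIcc] at this
  have hanti : AntitoneOn F (Set.Icc 0 T) := by
    apply antitoneOn_of_deriv_nonpos (convex_Icc 0 T) hFcont
    · intro t ht
      rw [interior_Icc] at ht
      exact (hFd t ht).differentiableAt.differentiableWithinAt
    · intro t ht
      rw [interior_Icc] at ht
      rw [(hFd t ht).deriv]
      have y1 := young2 aa (x t) (g t) lam hlam
      have y2 := young2 bb (h t) (x t) lam hlam
      simp only [hφdef, hγ]
      have key : 2 * x t * (aa * g t - k * x t + bb * h t) +
          ((2 * k - |aa| / lam - |bb| * lam) * x t ^ 2 - |aa| * lam * g t ^ 2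
            - |bb| / lam * h t ^ 2) =
          (2 * aa * x t * g t - (|aa| * x t ^ 2 / lam + |aa| * lam * g t ^ 2)) +
          (2 * bb * h t * x t - (|bb| * h t ^ 2 / lam + |bb| * lam * x t ^ 2)) := by
        field_simp
        ring
      rw [key]
      linarith [y1, y2]
  have hFT : F T ≤ F 0 := hanti (Set.left_mem_Icc.mpr hT) (Set.right_mem_Icc.mpr hT) hT
  have hF0 : F 0 = (x 0)^2 := by simp [hFdef]
  have ix : IntervalIntegrable (fun s => (x s)^2) MeasureTheory.volume 0 T :=
    ((hxc.pow 2).mono (huIcc ▸ hsub)).intervalIntegrable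
  have ig : IntervalIntegrable (fun s => (g s)^2) MeasureTheory.volume 0 T :=
    ((hg.pow 2).mono (huIcc ▸ hsub)).intervalIntegrable
  have ih : IntervalIntegrable (fun s => (h s)^2) MeasureTheory.volume 0 T :=
    ((hh.pow 2).mono (huIcc ▸ hsub)).intervalIntegrable
  have hsplit : (∫ s in (0:ℝ)..T, φ s) = γ * (∫ s in (0:ℝ)..T, (x s)^2)
      - |aa| * lam * (∫ s in (0:ℝ)..T, (g s)^2) - (|bb| / lam) * (∫ s in (0:ℝ)..T, (h s)^2) := by
    simp only [hφdef]
    rw [intervalIntegral.integral_sub ((ix.const_mul γ).sub (ig.const_mul (|aa| * lam)))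
      (ih.const_mul (|bb| / lam)),
      intervalIntegral.integral_sub (ix.const_mul γ) (ig.const_mul (|aa| * lam)),
      intervalIntegral.integral_const_mul, intervalIntegral.integral_const_mul,
      intervalIntegral.integral_const_mul]
  have hxT : (0:ℝ) ≤ (x T)^2 := sq_nonneg _
  simp only [hFdef] at hFT
  rw [hsplit] at hFT
  simp only [intervalIntegral.integral_same] at hFT
  linarith


lemma exists_lam (k a b : ℝ) (hk : 0 < k)
    (hcond : ((|a| ^ ((2:ℝ)/3) + |b| ^ ((2:ℝ)/3)) ^ ((3:ℝ)/2) < k ∧ |b| < |a|) ∨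
      ((2:ℝ) ^ ((3:ℝ)/2) * |a * b| ^ ((1:ℝ)/2) < k ∧ |a| ≤ |b|)) :
    ∃ lam : ℝ, 0 < lam ∧ lam ≤ 1 ∧ |a| / lam + |b| * lam < k := by
  rcases hcond with ⟨h1, _⟩ | ⟨h2, hab⟩
  · refine ⟨1, one_pos, le_refl 1, ?_⟩
    rw [div_one, mul_one]
    have hA := rpow_three_halves_superadd (|a| ^ ((2:ℝ)/3)) (|b| ^ ((2:ℝ)/3))
      (by positivity) (by positivity)
    have ea : (|a| ^ ((2:ℝ)/3)) ^ ((3:ℝ)/2) = |a| := by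
      rw [← Real.rpow_mul (abs_nonneg a)]
      norm_num
    have eb : (|b| ^ ((2:ℝ)/3)) ^ ((3:ℝ)/2) = |b| := by
      rw [← Real.rpow_mul (abs_nonneg b)]
      norm_num
    rw [ea, eb] at hA
    linarith
  · by_cases ha : a = 0
    · have hD : (0:ℝ) < 2 * |b| + 1 := by positivity
      refine ⟨min 1 (k / (2 * |b| + 1)), by positivity, min_le_left _ _, ?_⟩
      have ha0 : |a| = 0 := by rw [ha, abs_zero]
      rw [ha0, zero_div, zero_add]
      calc |b| * min 1 (k / (2 * |b| + 1)) ≤ |b| * (k / (2 * |b| + 1)) :=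
            mul_le_mul_of_nonneg_left (min_le_right _ _) (abs_nonneg b)
        _ < k := by
            rw [mul_div_assoc', div_lt_iff₀ hD]
            nlinarith [abs_nonneg b]
    · have ha' : 0 < |a| := abs_pos.mpr ha
      have hb' : 0 < |b| := lt_of_lt_of_le ha' hab
      have hsa : 0 < Real.sqrt |a| := Real.sqrt_pos.mpr ha'
      have hsb : 0 < Real.sqrt |b| := Real.sqrt_pos.mpr hb'
      refine ⟨Real.sqrt |a| / Real.sqrt |b|, div_pos hsa hsb, ?_, ?_⟩
      · rw [div_le_one hsb]
        exact Real.sqrt_le_sqrt hab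
      · have hq1 : (Real.sqrt |a|) ^ 2 = |a| := Real.sq_sqrt (abs_nonneg a)
        have hq2 : (Real.sqrt |b|) ^ 2 = |b| := Real.sq_sqrt (abs_nonneg b)
        have e1 : |a| / (Real.sqrt |a| / Real.sqrt |b|)
            + |b| * (Real.sqrt |a| / Real.sqrt |b|)
            = 2 * (Real.sqrt |a| * Real.sqrt |b|) := by
          field_simp
          ring_nf
          rw [hq1, hq2]
          ring
        rw [e1]
        have e2 : Real.sqrt |a| * Real.sqrt |b| = |a * b| ^ ((1:ℝ)/2) := by
          rw [abs_mul, ← Real.sqrt_eq_rpow, Real.sqrt_mul (abs_nonneg a)]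
        have e3 : (2:ℝ) ≤ 2 ^ ((3:ℝ)/2) := by
          calc (2:ℝ) = 2 ^ (1:ℝ) := (Real.rpow_one 2).symm
            _ ≤ 2 ^ ((3:ℝ)/2) := Real.rpow_le_rpow_of_exponent_le one_le_two (by norm_num)
        calc 2 * (Real.sqrt |a| * Real.sqrt |b|)
            ≤ 2 ^ ((3:ℝ)/2) * (Real.sqrt |a| * Real.sqrt |b|) :=
              mul_le_mul_of_nonneg_right e3 (by positivity)
          _ = 2 ^ ((3:ℝ)/2) * |a * b| ^ ((1:ℝ)/2) := by rw [e2]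
          _ < k := h2



/-- The `L²` norm of a real-valued signal on the interval `[0, t]`. -/
noncomputable def l2Norm (y : ℝ → ℝ) (t : ℝ) : ℝ :=
  Real.sqrt (∫ s in (0:ℝ)..t, (y s) ^ 2)

/-- Example 1 (one-sided string stability, trajectory-based condition (3.7)):
the linear string `ẋᵢ = a x_{i−1} − k xᵢ + b x_{i+1}` with zero downstream
input is `L²` one-sided string stable when either
`(|a|^{2/3} + |b|^{2/3})^{3/2} < k` and `|b| < |a|`, or
`2^{3/2} |ab|^{1/2} < k` and `|b| ≥ |a|`. -/
theorem linear_string_one_sided (k a b : ℝ) (hk : 0 < k)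
    (hcond : ((|a| ^ ((2:ℝ)/3) + |b| ^ ((2:ℝ)/3)) ^ ((3:ℝ)/2) < k ∧ |b| < |a|) ∨
      ((2:ℝ) ^ ((3:ℝ)/2) * |a * b| ^ ((1:ℝ)/2) < k ∧ |a| ≤ |b|)) :
    ∃ K : ℝ, 0 < K ∧ ∀ (n : ℕ) (hn : 1 ≤ n), ∃ C : ℝ, 0 ≤ C ∧
      ∀ u : ℝ → ℝ, ContinuousOn u (Set.Ici 0) →
      ∀ ξ : ℕ → ℝ, ∀ x : ℕ → ℝ → ℝ,
        (∀ t, x 0 t = u t) → (∀ t, x (n + 1) t = 0) →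
        (∀ i, 1 ≤ i → i ≤ n → x i 0 = ξ i ∧
          ∀ t ≥ (0:ℝ), HasDerivAt (x i)
            (a * x (i - 1) t - k * x i t + b * x (i + 1) t) t) →
        ∀ i, 1 ≤ i → i ≤ n → ∀ t ≥ (0:ℝ),
          l2Norm (x i) t ≤
            K * l2Norm u t +
            C * ((Finset.Icc 1 n).sup' (Finset.nonempty_Icc.mpr hn) fun j => |ξ j|) := by
  obtain ⟨lam, hlam0, hlam1, hlt⟩ := exists_lam k a b hk hcond
  set δ : ℝ := k - (|a| / lam + |b| * lam) with hδdef
  have hδ : 0 < δ := sub_pos.mpr hlt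
  refine ⟨1, one_pos, fun n hn => ?_⟩
  set c : ℝ := (1/lam)^(2*n) / (2*δ) with hcdef
  have hc0 : 0 ≤ c := by positivity
  refine ⟨Real.sqrt c, Real.sqrt_nonneg _, ?_⟩
  intro u hu ξ x hx0 hxn1 hsol i hi1 hin t ht
  set Ξ : ℝ := (Finset.Icc 1 n).sup' (Finset.nonempty_Icc.mpr hn) fun j => |ξ j| with hΞdef
  have hΞj : ∀ j, 1 ≤ j → j ≤ n → |ξ j| ≤ Ξ := fun j h1 h2 =>
    Finset.le_sup' (fun j => |ξ j|) (Finset.mem_Icc.mpr ⟨h1, h2⟩)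
  have hΞ0 : 0 ≤ Ξ := le_trans (abs_nonneg (ξ 1)) (hΞj 1 (le_refl 1) hn)
  have hx0f : x 0 = u := funext hx0
  have hxn1f : x (n+1) = fun _ => (0:ℝ) := funext hxn1
  have hc : ∀ m, m ≤ n + 1 → ContinuousOn (x m) (Set.Ici 0) := by
    intro m hm
    rcases Nat.eq_zero_or_pos m with hm0 | hmpos
    · rw [hm0, hx0f]; exact hu
    rcases eq_or_lt_of_le hm with hmeq | hmlt
    · rw [hmeq, hxn1f]; exact continuousOn_const
    · have hmn : m ≤ n := Nat.lt_succ_iff.mp hmlt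
      exact fun s hs => ((hsol m hmpos hmn).2 s hs).continuousAt.continuousWithinAt
  set S : ℕ → ℝ := fun j => ∫ s in (0:ℝ)..t, (x j s)^2 with hSdef
  have hS0 : ∀ j, 0 ≤ S j := fun j =>
    intervalIntegral.integral_nonneg ht (fun s _ => sq_nonneg _)
  have hSn1 : S (n+1) = 0 := by simp [hSdef, hxn1]
  have hrec : ∀ j, 1 ≤ j → j ≤ n →
      (2*k - |a| / lam - |b| * lam) * S j ≤
        (ξ j)^2 + |a| * lam * S (j-1) + (|b| / lam) * S (j+1) := by
    intro j h1 h2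
    obtain ⟨hinit, hderiv⟩ := hsol j h1 h2
    have hg : ContinuousOn (x (j-1)) (Set.Ici 0) := hc (j-1) (by omega)
    have hh : ContinuousOn (x (j+1)) (Set.Ici 0) := hc (j+1) (by omega)
    have := key_ineq k lam a b hk hlam0 (x j) (x (j-1)) (x (j+1)) hg hh hderiv t ht
    rw [hinit] at this
    exact this
  set w : ℕ → ℝ := fun j => S j / lam^(2*j) with hwdef
  have hne : (Finset.range (n+1)).Nonempty := ⟨0, Finset.mem_range.mpr (Nat.succ_pos n)⟩
  obtain ⟨i0, hi0mem, hWi0⟩ := Finset.exists_mem_eq_sup' hne w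
  set W : ℝ := (Finset.range (n+1)).sup' hne w with hWdef
  have hi0n : i0 ≤ n := Nat.lt_succ_iff.mp (Finset.mem_range.mp hi0mem)
  have hwW : ∀ j, j ≤ n → S j ≤ lam^(2*j) * W := by
    intro j hj
    have hle : w j ≤ W := Finset.le_sup' w (Finset.mem_range.mpr (Nat.lt_succ_of_le hj))
    have hp : (0:ℝ) < lam^(2*j) := pow_pos hlam0 _
    have hSw : S j = lam^(2*j) * w j := by
      rw [hwdef]; field_simp
    rw [hSw]
    exact mul_le_mul_of_nonneg_left hle hp.le
  have hw0 : w 0 = S 0 := by simp [hwdef]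
  have h0le : w 0 ≤ W := Finset.le_sup' w (Finset.mem_range.mpr (Nat.succ_pos n))
  have hW0 : 0 ≤ W := by
    have := hS0 0
    linarith [hw0 ▸ h0le]
  have hWbound : W ≤ S 0 + Ξ^2 * c := by
    rcases Nat.eq_zero_or_pos i0 with h0 | hpos
    · have hWS0 : W = S 0 := by rw [hWi0, h0, hw0]
      rw [hWS0]
      nlinarith [sq_nonneg Ξ, hc0]
    · obtain ⟨m, rfl⟩ := Nat.exists_eq_succ_of_ne_zero (Nat.pos_iff_ne_zero.mp hpos)
      have hrec1 := hrec (m+1) (Nat.le_add_left 1 m) hi0n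
      have hSm : S m ≤ lam^(2*m) * W := hwW m (by omega)
      have hSm2 : S (m+2) ≤ lam^(2*(m+2)) * W := by
        rcases eq_or_lt_of_le hi0n with heq | hlt2
        · have hz : S (m+2) = 0 := by rw [show m+2 = n+1 by omega]; exact hSn1
          rw [hz]; positivity
        · exact hwW (m+2) (by omega)
      have hSi0 : S (m+1) = lam^(2*(m+1)) * W := by
        rw [hWi0, hwdef]
        field_simp
      have hξ : (ξ (m+1))^2 ≤ Ξ^2 := by
        rw [← sq_abs]
        exact pow_le_pow_left₀ (abs_nonneg _) (hΞj (m+1) (Nat.le_add_left 1 m) hi0n) 2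
      have hsimp1 : (m+1) - 1 = m := by omega
      rw [hsimp1, hSi0] at hrec1
      have t1 : |a| * lam * S m ≤ (|a| / lam) * (lam^(2*(m+1)) * W) := by
        have h1 : |a| * lam * S m ≤ |a| * lam * (lam^(2*m) * W) :=
          mul_le_mul_of_nonneg_left hSm (by positivity)
        have h2 : |a| * lam * (lam^(2*m) * W) = (|a| / lam) * (lam^(2*(m+1)) * W) := by
          field_simp
          ring
        linarith [h2 ▸ h1]
      have t2 : (|b| / lam) * S ((m+1)+1) ≤ (|b| * lam) * (lam^(2*(m+1)) * W) := by
        have h1 : (|b| / lam) * S (m+2) ≤ (|b| / lam) * (lam^(2*(m+2)) * W) :=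
          mul_le_mul_of_nonneg_left hSm2 (by positivity)
        have h2 : (|b| / lam) * (lam^(2*(m+2)) * W) = (|b| * lam) * (lam^(2*(m+1)) * W) := by
          field_simp
          ring
        have h3 : (m+1)+1 = m+2 := by omega
        rw [h3]
        linarith [h2 ▸ h1]
      have key2 : 2*δ * (lam^(2*(m+1)) * W) ≤ Ξ^2 := by
        have expand2 : 2*δ * (lam^(2*(m+1)) * W) =
            (2*k - |a| / lam - |b| * lam) * (lam^(2*(m+1)) * W)
            - (|a| / lam) * (lam^(2*(m+1)) * W)
            - (|b| * lam) * (lam^(2*(m+1)) * W) := by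
          rw [hδdef]; ring
        set P : ℝ := lam ^ (2*(m+1)) with hP
        clear_value P S w W Ξ δ c
        linarith [hrec1, t1, t2, hξ, expand2]
      have hPn : lam^(2*n) ≤ lam^(2*(m+1)) :=
        pow_le_pow_of_le_one hlam0.le hlam1 (by omega)
      have key3 : 2*δ * (lam^(2*n) * W) ≤ Ξ^2 := by
        have h1 : lam^(2*n) * W ≤ lam^(2*(m+1)) * W :=
          mul_le_mul_of_nonneg_right hPn hW0
        have h2 : 2*δ * (lam^(2*n) * W) ≤ 2*δ * (lam^(2*(m+1)) * W) :=
          mul_le_mul_of_nonneg_left h1 (by positivity)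
        linarith
      have hden : (0:ℝ) < 2*δ*lam^(2*n) := by positivity
      have hWle : W ≤ Ξ^2 / (2*δ*lam^(2*n)) := by
        rw [le_div_iff₀ hden]
        calc W * (2*δ*lam^(2*n)) = 2*δ*(lam^(2*n)*W) := by ring
          _ ≤ Ξ^2 := key3
      have hceq : Ξ^2 * c = Ξ^2 / (2*δ*lam^(2*n)) := by
        rw [hcdef, div_pow, one_pow, div_div, mul_one_div, mul_comm (lam^(2*n)) (2*δ)]
      linarith [hS0 0, hWle, hceq]
  have hSi : S i ≤ S 0 + Ξ^2 * c := by
    have h1 : S i ≤ lam^(2*i) * W := hwW i hin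
    have h2 : lam^(2*i) * W ≤ W := by
      have := pow_le_one₀ hlam0.le hlam1 (n := 2*i)
      nlinarith [hW0]
    linarith
  have hSu : S 0 = ∫ s in (0:ℝ)..t, (u s)^2 := by
    simp only [hSdef]
    rw [hx0f]
  have goal1 : l2Norm (x i) t ≤ Real.sqrt (S 0) + Real.sqrt (Ξ^2 * c) := by
    calc l2Norm (x i) t = Real.sqrt (S i) := rfl
      _ ≤ Real.sqrt (S 0 + Ξ^2 * c) := Real.sqrt_le_sqrt hSi
      _ ≤ Real.sqrt (S 0) + Real.sqrt (Ξ^2 * c) :=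
          sqrt_add_le' _ _ (hS0 0) (by positivity)
  have e1 : Real.sqrt (S 0) = l2Norm u t := by rw [hSu]; rfl
  have e2 : Real.sqrt (Ξ^2 * c) = Real.sqrt c * Ξ := by
    rw [Real.sqrt_mul (sq_nonneg Ξ), Real.sqrt_sq hΞ0, mul_comm]
  rw [e1, e2] at goal1
  linarith [goal1]
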